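/- Fix λ > 0. Two quantal response equilibria coincide under anti-symmetric perturbation of strategies: if x and x' are both fixed points of the map x ↦ (softmax(−(b_i + Σ_j C_{ij}x_j)/λ))_{i∈[n]} with C + Cᵀ ⪰ 0 and C_{ii} = C_{ii}ᵀ, then (x − x')ᵀ C (x − x') + λ Σ_k ([x]_k − [x']_k)(ln[x]_k − ln[x']_k) = 0, and consequently x = x'. -/

import Mathlib

open Matrix Finset

noncomputable def softmax {k : ℕ} (z : Fin k → ℝ) : Fin k → ℝ :=
  fun i => Real.exp (z i) / ∑ j, Real.exp (z j)

lemma aux_nonneg {a b : ℝ} (ha : 0 < a) (hb : 0 < b) :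
    0 ≤ (a - b) * (Real.log a - Real.log b) := by
  rcases le_total b a with h | h
  · have : Real.log b ≤ Real.log a := Real.log_le_log hb h
    nlinarith
  · have : Real.log a ≤ Real.log b := Real.log_le_log ha h
    nlinarith

lemma aux_eq {a b : ℝ} (ha : 0 < a) (hb : 0 < b)
    (h : (a - b) * (Real.log a - Real.log b) = 0) : a = b := by
  rcases mul_eq_zero.1 h with h1 | h1
  · linarith [sub_eq_zero.1 h1]
  · exact Real.log_injOn_pos (Set.mem_Ioi.2 ha) (Set.mem_Ioi.2 hb) (sub_eq_zero.1 h1)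

theorem stmt6 {n : ℕ} {m : Fin n → ℕ}
    (b : ((i : Fin n) × Fin (m i)) → ℝ)
    (C : Matrix ((i : Fin n) × Fin (m i)) ((i : Fin n) × Fin (m i)) ℝ)
    (lam : ℝ) (hlam : 0 < lam)
    (hC : (C + Cᵀ).PosSemidef)
    (hCii : ∀ i : Fin n, ∀ a b : Fin (m i), C ⟨i, a⟩ ⟨i, b⟩ = C ⟨i, b⟩ ⟨i, a⟩)
    (x x' : ((i : Fin n) × Fin (m i)) → ℝ)
    (hx : ∀ i : Fin n, (fun a => x ⟨i, a⟩) =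
      softmax (fun a => -(b ⟨i, a⟩ + C.mulVec x ⟨i, a⟩) / lam))
    (hx' : ∀ i : Fin n, (fun a => x' ⟨i, a⟩) =
      softmax (fun a => -(b ⟨i, a⟩ + C.mulVec x' ⟨i, a⟩) / lam)) :
    (x - x') ⬝ᵥ C.mulVec (x - x') +
        lam * ∑ p, (x p - x' p) * (Real.log (x p) - Real.log (x' p)) = 0 ∧
      x = x' := by
  have hlam' : lam ≠ 0 := ne_of_gt hlam
  set S : (((i : Fin n) × Fin (m i)) → ℝ) → Fin n → ℝ :=
    fun y i => ∑ a, Real.exp (-(b ⟨i, a⟩ + C.mulVec y ⟨i, a⟩) / lam) with hS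
  -- facts about a fixed point
  have main : ∀ y : ((i : Fin n) × Fin (m i)) → ℝ,
      (∀ i, (fun a => y ⟨i, a⟩) = softmax (fun a => -(b ⟨i, a⟩ + C.mulVec y ⟨i, a⟩) / lam)) →
      (∀ p : (i : Fin n) × Fin (m i), 0 < y p) ∧
      (∀ i : Fin n, (m i ≠ 0) → ∑ a, y ⟨i, a⟩ = 1) ∧
      (∀ p : (i : Fin n) × Fin (m i),
        lam * Real.log (y p) = -(b p + C.mulVec y p) - lam * Real.log (S y p.1)) := by
    intro y hy
    have hSpos : ∀ i : Fin n, (m i ≠ 0) → 0 < S y i := by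
      intro i hi
      have : Nonempty (Fin (m i)) := ⟨⟨0, Nat.pos_of_ne_zero hi⟩⟩
      exact Finset.sum_pos (fun j _ => Real.exp_pos _) Finset.univ_nonempty
    have hval : ∀ p : (i : Fin n) × Fin (m i),
        y p = Real.exp (-(b p + C.mulVec y p) / lam) / S y p.1 := by
      intro ⟨i, a⟩
      exact congrFun (hy i) a
    have hpos : ∀ p : (i : Fin n) × Fin (m i), 0 < y p := by
      intro p
      rw [hval p]
      exact div_pos (Real.exp_pos _) (hSpos p.1 (by have := p.2.isLt; omega))
    refine ⟨hpos, ?_, ?_⟩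
    · intro i hi
      have : ∑ a, y ⟨i, a⟩ = ∑ a : Fin (m i), Real.exp (-(b ⟨i, a⟩ + C.mulVec y ⟨i, a⟩) / lam) / S y i := by
        exact Finset.sum_congr rfl fun a _ => hval ⟨i, a⟩
      rw [this, ← Finset.sum_div]
      exact div_self (ne_of_gt (hSpos i hi))
    · intro p
      have hSp : 0 < S y p.1 := hSpos p.1 (by have := p.2.isLt; omega)
      rw [hval p, Real.log_div (Real.exp_ne_zero _) (ne_of_gt hSp), Real.log_exp]
      field_simp
  obtain ⟨hxpos, hxsum, hxlog⟩ := main x hx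
  obtain ⟨hx'pos, hx'sum, hx'log⟩ := main x' hx'
  -- pointwise identity
  have pointeq : ∀ p : (i : Fin n) × Fin (m i),
      (C.mulVec (x - x')) p + lam * (Real.log (x p) - Real.log (x' p)) =
      lam * (Real.log (S x' p.1) - Real.log (S x p.1)) := by
    intro p
    have h1 := hxlog p
    have h2 := hx'log p
    have h3 : (C.mulVec (x - x')) p = C.mulVec x p - C.mulVec x' p := by
      rw [Matrix.mulVec_sub]; rfl
    rw [h3, mul_sub, mul_sub, h1, h2]
    ring
  -- the total is zero
  have hsplit : (x - x') ⬝ᵥ C.mulVec (x - x') +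
      lam * ∑ p, (x p - x' p) * (Real.log (x p) - Real.log (x' p)) =
      ∑ p : (i : Fin n) × Fin (m i),
        (x p - x' p) * ((C.mulVec (x - x')) p + lam * (Real.log (x p) - Real.log (x' p))) := by
    rw [dotProduct, Finset.mul_sum, ← Finset.sum_add_distrib]
    refine Finset.sum_congr rfl fun p _ => ?_
    simp only [Pi.sub_apply]
    ring
  have hzero : (x - x') ⬝ᵥ C.mulVec (x - x') +
      lam * ∑ p, (x p - x' p) * (Real.log (x p) - Real.log (x' p)) = 0 := by
    rw [hsplit]
    have : ∑ p : (i : Fin n) × Fin (m i),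
        (x p - x' p) * ((C.mulVec (x - x')) p + lam * (Real.log (x p) - Real.log (x' p))) =
        ∑ p : (i : Fin n) × Fin (m i),
        (x p - x' p) * (lam * (Real.log (S x' p.1) - Real.log (S x p.1))) :=
      Finset.sum_congr rfl fun p _ => by rw [pointeq p]
    rw [this, ← Finset.univ_sigma_univ, Finset.sum_sigma]
    refine Finset.sum_eq_zero fun i _ => ?_
    rcases Nat.eq_zero_or_pos (m i) with hmi | hmi
    · apply Finset.sum_eq_zero
      intro a _
      exact absurd a.2 (by omega)
    · have hd : ∑ a : Fin (m i), (x ⟨i, a⟩ - x' ⟨i, a⟩) = 0 := by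
        rw [Finset.sum_sub_distrib, hxsum i (by omega), hx'sum i (by omega), sub_self]
      have : ∑ s : Fin (m i), (x ⟨i, s⟩ - x' ⟨i, s⟩) *
          (lam * (Real.log (S x' i) - Real.log (S x i))) = 0 := by
        rw [← Finset.sum_mul, hd, zero_mul]
      exact this
  refine ⟨hzero, ?_⟩
  -- nonnegativity of the quadratic form
  have hq : 0 ≤ (x - x') ⬝ᵥ C.mulVec (x - x') := by
    have h2 := hC.dotProduct_mulVec_nonneg (x - x')
    simp only [RCLike.re_to_real, star_trivial] at h2
    rw [Matrix.add_mulVec, dotProduct_add, Matrix.mulVec_transpose] at h2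
    have h3 : (x - x') ⬝ᵥ Matrix.vecMul (x - x') C = (x - x') ⬝ᵥ C.mulVec (x - x') := by
      rw [dotProduct_comm, ← Matrix.dotProduct_mulVec]
    linarith
  have hlogsum_nonneg : ∀ p ∈ (Finset.univ : Finset ((i : Fin n) × Fin (m i))),
      0 ≤ (x p - x' p) * (Real.log (x p) - Real.log (x' p)) :=
    fun p _ => aux_nonneg (hxpos p) (hx'pos p)
  have hls : 0 ≤ ∑ p, (x p - x' p) * (Real.log (x p) - Real.log (x' p)) :=
    Finset.sum_nonneg hlogsum_nonneg
  have hsum0 : ∑ p, (x p - x' p) * (Real.log (x p) - Real.log (x' p)) = 0 := by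
    nlinarith
  have heach := (Finset.sum_eq_zero_iff_of_nonneg hlogsum_nonneg).1 hsum0
  funext p
  exact aux_eq (hxpos p) (hx'pos p) (heach p (Finset.mem_univ p))
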